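/- Let X and Y be standard Borel spaces and f : X → Y a Borel map with countable fibers (i.e., f⁻¹({y}) is countable for every y ∈ Y). Then f(X) is a Borel subset of Y. -/

import Mathlib

open MeasureTheory Set

namespace LNaux

/-- first `n` values of `z` as a list -/
def pre (z : ℕ → ℕ) (n : ℕ) : List ℕ := (List.range n).map z

@[simp] lemma pre_length (z : ℕ → ℕ) (n : ℕ) : (pre z n).length = n := by
  simp [pre]

lemma pre_getElem (z : ℕ → ℕ) {n i : ℕ} (h : i < n) :
    (pre z n)[i]'(by simpa using h) = z i := by
  simp [pre]

lemma pre_prefix (z : ℕ → ℕ) {m n : ℕ} (h : m ≤ n) : pre z m <+: pre z n := by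
  rw [List.prefix_iff_eq_take]
  apply List.ext_getElem (by simpa using h)
  intro i h1 h2
  simp only [pre_length] at h1
  rw [pre_getElem z h1, List.getElem_take]
  exact (pre_getElem z (lt_of_lt_of_le h1 h)).symm

def IsTree (T : Set (List ℕ)) : Prop := ∀ ⦃s t : List ℕ⦄, s <+: t → t ∈ T → s ∈ T

def HasBranch (T : Set (List ℕ)) : Prop := ∃ z : ℕ → ℕ, ∀ n, pre z n ∈ T

def Mono (φ : List ℕ → List ℕ) (T S : Set (List ℕ)) : Prop :=
  (∀ l ∈ T, φ l ∈ S) ∧ ∀ s t, s ∈ T → t ∈ T → s <+: t → s.length < t.length →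
    φ s <+: φ t ∧ (φ s).length < (φ t).length

def TLe (T S : Set (List ℕ)) : Prop := ∃ φ, Mono φ T S

/-- one-step extension relation on a tree -/
def rel (T : Set (List ℕ)) (a b : List ℕ) : Prop := a ∈ T ∧ ∃ n, a = b ++ [n]

/-- a prefix-increasing chain of members with lengths > n gives a branch -/
lemma branch_of_chain {S : Set (List ℕ)} (hS : IsTree S) (c : ℕ → List ℕ)
    (hmem : ∀ n, c n ∈ S) (hpref : ∀ n, c n <+: c (n + 1)) (hlen : ∀ n, n < (c n).length) :
    HasBranch S := by
  have hmono : ∀ {m n : ℕ}, m ≤ n → c m <+: c n := by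
    intro m n h
    induction n with
    | zero => simpa [Nat.le_zero.1 h] using List.prefix_refl _
    | succ n ih =>
      rcases Nat.lt_or_ge m (n+1) with h' | h'
      · exact (ih (Nat.lt_succ_iff.1 h')).trans (hpref n)
      · have : m = n + 1 := le_antisymm h h'
        simp [this]
  refine ⟨fun i => (c (i+1)).getD i 0, fun n => ?_⟩
  have hkey : pre (fun i => (c (i+1)).getD i 0) n = (c n).take n := by
    apply List.ext_getElem (by simp [min_eq_left (le_of_lt (hlen n))])
    intro i h1 h2
    simp only [pre_length] at h1
    rw [pre_getElem _ h1, List.getElem_take]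
    have hin : i < (c n).length := lt_of_lt_of_le h1 (le_of_lt (hlen n))
    have hii : i < (c (i+1)).length := lt_trans (Nat.lt_succ_self i) (hlen (i+1))
    rw [List.getD_eq_getElem _ _ hii]
    rcases Nat.lt_or_ge (i+1) n with h' | h'
    · exact (hmono (le_of_lt h')).getElem hii
    · exact ((hmono h').getElem hin).symm
  rw [hkey]
  exact hS (List.take_prefix _ _) (hmem n)

/-- no branch implies the extension relation is well-founded -/
lemma wf_of_not_branch {T : Set (List ℕ)} (hT : IsTree T) (h : ¬ HasBranch T) :
    WellFounded (rel T) := by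
  by_contra hwf
  apply h
  have : ∃ a, ¬ Acc (rel T) a := by
    by_contra h'
    push_neg at h'
    exact hwf ⟨h'⟩
  obtain ⟨a0, ha0⟩ := this
  have step : ∀ a, ¬ Acc (rel T) a → ∃ b, rel T b a ∧ ¬ Acc (rel T) b := by
    intro a ha
    by_contra h'
    push_neg at h'
    exact ha (Acc.intro a fun b hb => by
      by_contra hb'
      exact hb' (by
        rcases Classical.em (Acc (rel T) b) with h1 | h1
        · exact h1
        · exact absurd h1 (by intro h2; exact h2 (h' b hb))))
  choose! nxt hnxt1 hnxt2 using step
  let a : ℕ → List ℕ := fun n => Nat.rec a0 (fun _ x => nxt x) n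
  have hacc : ∀ n, ¬ Acc (rel T) (a n) := by
    intro n
    induction n with
    | zero => exact ha0
    | succ n ih => exact hnxt2 _ ih
  have hrel : ∀ n, rel T (a (n+1)) (a n) := fun n => hnxt1 _ (hacc n)
  have hlen1 : 1 ≤ (a 1).length := by
    obtain ⟨-, n, hn⟩ := hrel 0
    rw [show a 1 = a 0 ++ [n] from hn]
    simp
  have hlenshift : ∀ n, (a (n+1)).length = (a 1).length + n := by
    intro n
    induction n with
    | zero => rfl
    | succ n ih =>
      obtain ⟨-, m, hm⟩ := hrel (n+1)
      rw [hm, List.length_append, ih]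
      simp [Nat.add_assoc]
  apply branch_of_chain hT (fun n => a (n+1))
  · intro n; exact (hrel n).1
  · intro n
    obtain ⟨-, m, hm⟩ := hrel (n+1)
    rw [hm]; exact List.prefix_append _ _
  · intro n
    rw [hlenshift n]
    omega

/-- L1: if `S` has a branch then any tree maps into it -/
lemma tle_of_branch {T S : Set (List ℕ)} (h : HasBranch S) : TLe T S := by
  obtain ⟨z, hz⟩ := h
  refine ⟨fun l => pre z l.length, fun l _ => hz _, ?_⟩
  intro s t _ _ _ hlen
  exact ⟨pre_prefix z (le_of_lt hlen), by simpa using hlen⟩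

/-- L2: `TLe` transports branches -/
lemma branch_of_tle {T S : Set (List ℕ)} (hT : IsTree T) (hS : IsTree S)
    (h : TLe T S) (hb : HasBranch T) : HasBranch S := by
  obtain ⟨φ, hmap, hmono⟩ := h
  obtain ⟨z, hz⟩ := hb
  have key : ∀ n, n ≤ (φ (pre z n)).length := by
    intro n
    induction n with
    | zero => exact Nat.zero_le _
    | succ n ih =>
      have := (hmono (pre z n) (pre z (n+1)) (hz n) (hz (n+1))
        (pre_prefix z (Nat.le_succ n)) (by simp)).2
      omega
  apply branch_of_chain hS (fun n => φ (pre z (n+1)))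
  · intro n; exact hmap _ (hz (n+1))
  · intro n
    exact (hmono _ _ (hz (n+1)) (hz (n+2)) (pre_prefix z (by omega)) (by simp)).1
  · intro n
    have := key (n+1)
    omega

open Classical in
/-- rank-comparison map -/
noncomputable def phi (T S : Set (List ℕ)) (wfT : WellFounded (rel T))
    (wfS : WellFounded (rel S)) : List ℕ → List ℕ := fun l =>
  if h : l = [] then []
  else
    (phi T S wfT wfS l.dropLast) ++
      [if h2 : ∃ m, ((phi T S wfT wfS l.dropLast) ++ [m]) ∈ S ∧
          (wfT.apply l).rank ≤ (wfS.apply ((phi T S wfT wfS l.dropLast) ++ [m])).rank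
        then h2.choose else 0]
termination_by l => l.length
decreasing_by
  simp only [List.length_dropLast]
  exact Nat.pred_lt (by simpa using h)

lemma phi_nil (T S wfT wfS) : phi T S wfT wfS [] = [] := by
  rw [phi]; simp

lemma phi_cons {T S wfT wfS} {l : List ℕ} (h : l ≠ []) :
    ∃ m : ℕ, phi T S wfT wfS l = (phi T S wfT wfS l.dropLast) ++ [m] ∧
      ((∃ m', ((phi T S wfT wfS l.dropLast) ++ [m']) ∈ S ∧
          (wfT.apply l).rank ≤ (wfS.apply ((phi T S wfT wfS l.dropLast) ++ [m'])).rank) →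
        ((phi T S wfT wfS l.dropLast) ++ [m]) ∈ S ∧
          (wfT.apply l).rank ≤ (wfS.apply ((phi T S wfT wfS l.dropLast) ++ [m])).rank) := by
  rw [phi, dif_neg h]
  split
  · next h2 => exact ⟨h2.choose, rfl, fun _ => h2.choose_spec⟩
  · next h2 => exact ⟨0, rfl, fun h3 => absurd h3 h2⟩

lemma phi_length (T S wfT wfS) : ∀ l : List ℕ, (phi T S wfT wfS l).length = l.length := by
  intro l
  induction l using List.reverseRecOn with
  | nil => simp [phi_nil]
  | append_singleton t n ih =>
    obtain ⟨m, hm, -⟩ := phi_cons (T := T) (S := S) (wfT := wfT) (wfS := wfS)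
      (l := t ++ [n]) (by simp)
    rw [hm]
    simp [ih]

lemma phi_strictmono {T S wfT wfS} : ∀ {s t : List ℕ}, s <+: t → s.length < t.length →
    phi T S wfT wfS s <+: phi T S wfT wfS t := by
  intro s t
  induction t using List.reverseRecOn with
  | nil => intro _ h; simp at h
  | append_singleton t n ih =>
    intro hpre hlen
    obtain ⟨m, hm, -⟩ := phi_cons (T := T) (S := S) (wfT := wfT) (wfS := wfS)
      (l := t ++ [n]) (by simp)
    have hdl : (t ++ [n]).dropLast = t := by simp
    rw [hdl] at hm
    rw [hm]
    have hst : s <+: t := by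
      rcases List.prefix_concat_iff.1 hpre with h | h
      · exact absurd hlen (by simp [h])
      · exact h
    rcases eq_or_lt_of_le (Nat.le_of_lt_succ (by simpa using hlen)) with he | hl
    · have : s = t := List.IsPrefix.eq_of_length hst he
      rw [this]
      exact List.prefix_append _ _
    · exact (ih hst hl).trans (List.prefix_append _ _)

lemma phi_invariant {T S : Set (List ℕ)} {wfT : WellFounded (rel T)}
    {wfS : WellFounded (rel S)} (hT : IsTree T) (hSnil : ([] : List ℕ) ∈ S)
    (hroot : (wfT.apply ([] : List ℕ)).rank ≤ (wfS.apply ([] : List ℕ)).rank) :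
    ∀ l ∈ T, phi T S wfT wfS l ∈ S ∧
      (wfT.apply l).rank ≤ (wfS.apply (phi T S wfT wfS l)).rank := by
  intro l
  induction l using List.reverseRecOn with
  | nil => intro _; rw [phi_nil]; exact ⟨hSnil, hroot⟩
  | append_singleton t n ih =>
    intro hl
    have ht : t ∈ T := hT (List.prefix_append _ _) hl
    obtain ⟨hmapt, hrankt⟩ := ih ht
    have hrelT : rel T (t ++ [n]) t := ⟨hl, n, rfl⟩
    have hlt : (wfT.apply (t ++ [n])).rank < (wfT.apply t).rank := by
      have := Acc.rank_lt_of_rel (wfT.apply t) hrelT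
      exact this
    have hlt2 : (wfT.apply (t ++ [n])).rank < (wfS.apply (phi T S wfT wfS t)).rank :=
      lt_of_lt_of_le hlt hrankt
    rw [(wfS.apply (phi T S wfT wfS t)).rank_eq, Ordinal.lt_iSup_iff] at hlt2
    obtain ⟨⟨b, hb⟩, hblt⟩ := hlt2
    rw [Order.lt_succ_iff] at hblt
    obtain ⟨hbS, m, rfl⟩ := hb
    have h2 : ∃ m', ((phi T S wfT wfS (t ++ [n]).dropLast) ++ [m']) ∈ S ∧
        (wfT.apply (t ++ [n])).rank ≤
          (wfS.apply ((phi T S wfT wfS (t ++ [n]).dropLast) ++ [m'])).rank := by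
      refine ⟨m, ?_, ?_⟩
      · simpa using hbS
      · simp only [List.dropLast_concat]
        exact hblt
    obtain ⟨m', hm', hprop⟩ := phi_cons (T := T) (S := S) (wfT := wfT) (wfS := wfS)
      (l := t ++ [n]) (by simp)
    obtain ⟨hin, hle⟩ := hprop h2
    rw [hm']
    constructor
    · simpa using hin
    · simpa using hle

lemma tle_total {T S : Set (List ℕ)} (hT : IsTree T) (hS : IsTree S)
    (hbT : ¬ HasBranch T) (hbS : ¬ HasBranch S) : TLe T S ∨ TLe S T := by
  have wfT := wf_of_not_branch hT hbT
  have wfS := wf_of_not_branch hS hbS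
  by_cases hTe : T = ∅
  · exact Or.inl ⟨id, fun l hl => by simp [hTe] at hl, fun a b ha => by simp [hTe] at ha⟩
  by_cases hSe : S = ∅
  · exact Or.inr ⟨id, fun l hl => by simp [hSe] at hl, fun a b ha => by simp [hSe] at ha⟩
  have hTnil : ([] : List ℕ) ∈ T := by
    obtain ⟨l, hl⟩ := nonempty_iff_ne_empty.2 hTe
    exact hT (List.nil_prefix) hl
  have hSnil : ([] : List ℕ) ∈ S := by
    obtain ⟨l, hl⟩ := nonempty_iff_ne_empty.2 hSe
    exact hS (List.nil_prefix) hl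
  rcases le_total ((wfT.apply ([] : List ℕ)).rank) ((wfS.apply ([] : List ℕ)).rank) with h | h
  · refine Or.inl ⟨phi T S wfT wfS, fun l hl => (phi_invariant hT hSnil h l hl).1, ?_⟩
    intro a b _ _ hpre hlen
    refine ⟨phi_strictmono hpre hlen, ?_⟩
    rw [phi_length, phi_length]
    exact hlen
  · refine Or.inr ⟨phi S T wfS wfT, fun l hl => (phi_invariant hS hTnil h l hl).1, ?_⟩
    intro a b _ _ hpre hlen
    refine ⟨phi_strictmono hpre hlen, ?_⟩
    rw [phi_length, phi_length]
    exact hlen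

/-- cylinder of a list -/
def Ns (l : List ℕ) : Set (ℕ → ℕ) := {x | pre x l.length = l}

lemma mem_Ns_iff {l : List ℕ} {x : ℕ → ℕ} :
    x ∈ Ns l ↔ ∀ i (h : i < l.length), x i = l[i] := by
  constructor
  · intro hx i h
    have h' : i < (pre x l.length).length := by simpa using h
    exact (pre_getElem x (by simpa using h)).symm.trans (List.getElem_of_eq hx h')
  · intro h
    apply List.ext_getElem (by simp)
    intro i h1 h2
    rw [pre_getElem x (by simpa using h1)]
    exact h i h2

lemma self_mem_Ns (z : ℕ → ℕ) (n : ℕ) : z ∈ Ns (pre z n) := by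
  show pre z (pre z n).length = pre z n
  rw [pre_length]

lemma Ns_anti {s t : List ℕ} (h : s <+: t) : Ns t ⊆ Ns s := by
  intro x hx
  rw [mem_Ns_iff] at hx ⊢
  intro i hi
  exact (hx i (lt_of_lt_of_le hi h.length_le)).trans (h.getElem hi).symm

/-- cylinders around `z` form a neighborhood basis -/
lemma cylinder_nhds (z : ℕ → ℕ) {O : Set (ℕ → ℕ)} (hO : O ∈ nhds z) :
    ∃ n, Ns (pre z n) ⊆ O := by
  rw [nhds_pi, Filter.mem_pi] at hO
  obtain ⟨I, hIfin, t, ht, hsub⟩ := hO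
  obtain ⟨n, hn⟩ : ∃ n, ∀ i ∈ I, i < n := by
    rcases I.eq_empty_or_nonempty with h | h
    · exact ⟨0, by simp [h]⟩
    · obtain ⟨m, hm⟩ := hIfin.bddAbove
      exact ⟨m + 1, fun i hi => Nat.lt_succ_of_le (hm hi)⟩
  refine ⟨n, fun x hx => hsub ?_⟩
  intro i hi
  have : x i = z i := by
    have := (mem_Ns_iff.1 hx) i (by simpa using hn i hi)
    rwa [pre_getElem z (hn i hi)] at this
  rw [this]
  have := ht i
  rwa [nhds_discrete, Filter.mem_pure] at this

variable {Y : Type*} [TopologicalSpace Y]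

/-- tree of a function from Baire space at a point -/
def tree (g : (ℕ → ℕ) → Y) (y : Y) : Set (List ℕ) :=
  {l | y ∈ closure (g '' Ns l)}

lemma isTree_tree (g : (ℕ → ℕ) → Y) (y : Y) : IsTree (tree g y) := by
  intro s t hst ht
  exact closure_mono (image_mono (Ns_anti hst)) ht

lemma branch_tree_iff [T2Space Y] {g : (ℕ → ℕ) → Y} (hg : Continuous g) (y : Y) :
    HasBranch (tree g y) ↔ y ∈ range g := by
  constructor
  · rintro ⟨z, hz⟩
    by_contra hy
    have hne : g z ≠ y := fun h => hy ⟨z, h⟩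
    obtain ⟨v, w, hv, hw, hgzv, hyw, hvw⟩ := t2_separation hne
    obtain ⟨n, hn⟩ := cylinder_nhds z (hg.continuousAt.preimage_mem_nhds (hv.mem_nhds hgzv))
    have h1 : g '' Ns (pre z n) ⊆ v := by
      rintro - ⟨x, hx, rfl⟩
      exact hn hx
    have h2 : y ∈ closure v := closure_mono h1 (hz n)
    exact absurd h2 (fun h => disjoint_left.1 (hvw.closure_left hw) h hyw)
  · rintro ⟨x, rfl⟩
    exact ⟨x, fun n => subset_closure ⟨x, self_mem_Ns x n, rfl⟩⟩

noncomputable def ee : List ℕ ≃ ℕ := Denumerable.eqv (List ℕ)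

noncomputable def phiOf (F : ℕ → ℕ) : List ℕ → List ℕ := fun l => ee.symm (F (ee l))

section Sep

variable {Y : Type*} [TopologicalSpace Y] [PolishSpace Y] [MeasurableSpace Y] [BorelSpace Y]

lemma analyticSet_tle {g h : (ℕ → ℕ) → Y} :
    AnalyticSet {y : Y | TLe (tree g y) (tree h y)} := by
  classical
  have hWmeas : MeasurableSet {p : Y × (ℕ → ℕ) | Mono (phiOf p.2) (tree g p.1) (tree h p.1)} := by
    have hdecomp : {p : Y × (ℕ → ℕ) | Mono (phiOf p.2) (tree g p.1) (tree h p.1)} =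
        (⋂ (l : List ℕ), {p : Y × (ℕ → ℕ) |
            p.1 ∈ closure (g '' Ns l) → p.1 ∈ closure (h '' Ns (phiOf p.2 l))}) ∩
        (⋂ (q : List ℕ × List ℕ), {p : Y × (ℕ → ℕ) |
            p.1 ∈ closure (g '' Ns q.1) → p.1 ∈ closure (g '' Ns q.2) →
            q.1 <+: q.2 → q.1.length < q.2.length →
            (phiOf p.2 q.1 <+: phiOf p.2 q.2 ∧
              (phiOf p.2 q.1).length < (phiOf p.2 q.2).length)}) := by
      ext p
      simp only [Mono, tree, mem_setOf_eq, mem_inter_iff, mem_iInter, Prod.forall]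
    rw [hdecomp]
    have evmeas : ∀ (l : List ℕ) (k : ℕ),
        MeasurableSet {p : Y × (ℕ → ℕ) | p.2 (ee l) = k} := by
      intro l k
      have : {p : Y × (ℕ → ℕ) | p.2 (ee l) = k} =
          (fun p : Y × (ℕ → ℕ) => p.2 (ee l)) ⁻¹' {k} := rfl
      rw [this]
      exact ((measurable_pi_apply (ee l)).comp measurable_snd) (measurableSet_singleton k)
    have clmeas : ∀ (g' : (ℕ → ℕ) → Y) (l : List ℕ),
        MeasurableSet {p : Y × (ℕ → ℕ) | p.1 ∈ closure (g' '' Ns l)} :=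
      fun g' l => measurable_fst isClosed_closure.measurableSet
    apply MeasurableSet.inter
    · refine MeasurableSet.iInter fun l => ?_
      have : {p : Y × (ℕ → ℕ) |
          p.1 ∈ closure (g '' Ns l) → p.1 ∈ closure (h '' Ns (phiOf p.2 l))} =
          {p : Y × (ℕ → ℕ) | p.1 ∈ closure (g '' Ns l)}ᶜ ∪
          ⋃ (k : ℕ), ({p : Y × (ℕ → ℕ) | p.2 (ee l) = k} ∩
            {p : Y × (ℕ → ℕ) | p.1 ∈ closure (h '' Ns (ee.symm k))}) := by
        ext p
        simp only [mem_setOf_eq, mem_union, mem_compl_iff, mem_iUnion, mem_inter_iff, phiOf]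
        constructor
        · intro hp
          by_cases hcl : p.1 ∈ closure (g '' Ns l)
          · exact Or.inr ⟨p.2 (ee l), rfl, hp hcl⟩
          · exact Or.inl hcl
        · rintro (hp | ⟨k, hk, hmem⟩) hcl
          · exact absurd hcl hp
          · rwa [hk]
      rw [this]
      exact (clmeas g l).compl.union
        (MeasurableSet.iUnion fun k => (evmeas l k).inter (clmeas h _))
    · refine MeasurableSet.iInter fun q => ?_
      by_cases hc : q.1 <+: q.2 ∧ q.1.length < q.2.length
      · have : {p : Y × (ℕ → ℕ) |
            p.1 ∈ closure (g '' Ns q.1) → p.1 ∈ closure (g '' Ns q.2) →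
            q.1 <+: q.2 → q.1.length < q.2.length →
            (phiOf p.2 q.1 <+: phiOf p.2 q.2 ∧
              (phiOf p.2 q.1).length < (phiOf p.2 q.2).length)} =
            ({p : Y × (ℕ → ℕ) | p.1 ∈ closure (g '' Ns q.1)} ∩
             {p : Y × (ℕ → ℕ) | p.1 ∈ closure (g '' Ns q.2)})ᶜ ∪
            ⋃ (k₁ : ℕ) (k₂ : ℕ)
              (_ : ee.symm k₁ <+: ee.symm k₂ ∧ (ee.symm k₁).length < (ee.symm k₂).length),
              ({p : Y × (ℕ → ℕ) | p.2 (ee q.1) = k₁} ∩ {p : Y × (ℕ → ℕ) | p.2 (ee q.2) = k₂}) := by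
          ext p
          simp only [mem_setOf_eq, mem_union, mem_compl_iff, mem_inter_iff, mem_iUnion, phiOf]
          constructor
          · intro hp
            by_cases hcl : p.1 ∈ closure (g '' Ns q.1) ∧ p.1 ∈ closure (g '' Ns q.2)
            · exact Or.inr ⟨p.2 (ee q.1), p.2 (ee q.2),
                hp hcl.1 hcl.2 hc.1 hc.2, rfl, rfl⟩
            · exact Or.inl (by tauto)
          · rintro (hp | ⟨k₁, k₂, hk, h1, h2⟩) hcl1 hcl2 _ _
            · exact absurd ⟨hcl1, hcl2⟩ hp
            · rw [h1, h2]; exact hk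
        rw [this]
        refine ((clmeas g q.1).inter (clmeas g q.2)).compl.union ?_
        refine MeasurableSet.iUnion fun k₁ => MeasurableSet.iUnion fun k₂ => ?_
        exact MeasurableSet.iUnion fun _ => (evmeas q.1 k₁).inter (evmeas q.2 k₂)
      · have : {p : Y × (ℕ → ℕ) |
            p.1 ∈ closure (g '' Ns q.1) → p.1 ∈ closure (g '' Ns q.2) →
            q.1 <+: q.2 → q.1.length < q.2.length →
            (phiOf p.2 q.1 <+: phiOf p.2 q.2 ∧
              (phiOf p.2 q.1).length < (phiOf p.2 q.2).length)} = univ := by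
          ext p
          simp only [mem_setOf_eq, mem_univ, iff_true]
          intro _ _ hpre hlen
          exact absurd ⟨hpre, hlen⟩ hc
        rw [this]
        exact MeasurableSet.univ
  have himg : {y : Y | TLe (tree g y) (tree h y)} =
      Prod.fst '' {p : Y × (ℕ → ℕ) | Mono (phiOf p.2) (tree g p.1) (tree h p.1)} := by
    ext y
    constructor
    · rintro ⟨φ, hφ⟩
      refine ⟨(y, fun n => ee (φ (ee.symm n))), ?_, rfl⟩
      have : phiOf (fun n => ee (φ (ee.symm n))) = φ := by
        funext l
        simp [phiOf]
      simpa [this] using hφ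
    · rintro ⟨p, hp, rfl⟩
      exact ⟨phiOf p.2, hp⟩
  rw [himg]
  exact hWmeas.analyticSet_image measurable_fst

/-- Luzin's second separation theorem (with coanalytic separators). -/
lemma secondSep {A B : Set Y} (hA : AnalyticSet A) (hB : AnalyticSet B) :
    ∃ C C' : Set Y, AnalyticSet Cᶜ ∧ AnalyticSet C'ᶜ ∧
      A \ B ⊆ C ∧ B \ A ⊆ C' ∧ Disjoint C C' := by
  rw [AnalyticSet] at hA hB
  rcases hA with rfl | ⟨g, hg, rfl⟩
  · exact ⟨∅, univ, by simpa using isClosed_univ.analyticSet,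
      by simpa using analyticSet_empty, by simp, by simp, disjoint_bot_left⟩
  rcases hB with rfl | ⟨h, hh, rfl⟩
  · exact ⟨univ, ∅, by simpa using analyticSet_empty,
      by simpa using isClosed_univ.analyticSet, by simp, by simp, disjoint_bot_right⟩
  have hAB : ∀ (g' h' : (ℕ → ℕ) → Y), Continuous g' → Continuous h' →
      range g' \ range h' ⊆ (range h')ᶜ ∩ {y | TLe (tree g' y) (tree h' y)}ᶜ := by
    intro g' h' hg' hh' y hy
    refine ⟨hy.2, fun hletle => hy.2 ?_⟩
    rw [← branch_tree_iff hh' y]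
    exact branch_of_tle (isTree_tree g' y) (isTree_tree h' y) hletle
      ((branch_tree_iff hg' y).2 hy.1)
  have hcompl : ∀ (g' h' : (ℕ → ℕ) → Y), Continuous g' → Continuous h' →
      AnalyticSet ((range h')ᶜ ∩ {y | TLe (tree g' y) (tree h' y)}ᶜ)ᶜ := by
    intro g' h' hg' hh'
    rw [compl_inter, compl_compl, compl_compl]
    rw [Set.union_eq_iUnion]
    refine AnalyticSet.iUnion fun b => ?_
    cases b
    · simpa using analyticSet_tle (g := g') (h := h')
    · simpa using analyticSet_range_of_polishSpace hh'
  refine ⟨(range h)ᶜ ∩ {y | TLe (tree g y) (tree h y)}ᶜ,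
          (range g)ᶜ ∩ {y | TLe (tree h y) (tree g y)}ᶜ,
          hcompl g h hg hh, hcompl h g hh hg, hAB g h hg hh, hAB h g hh hg, ?_⟩
  rw [disjoint_left]
  rintro y ⟨hyh, hygh⟩ ⟨hyg, hyhg⟩
  rcases tle_total (isTree_tree g y) (isTree_tree h y)
      (fun hb => hyg ((branch_tree_iff hg y).1 hb))
      (fun hb => hyh ((branch_tree_iff hh y).1 hb)) with ht | ht
  · exact hygh ht
  · exact hyhg ht

end Sep

lemma aunion {Y : Type*} [TopologicalSpace Y] {s t : Set Y}
    (hs : AnalyticSet s) (ht : AnalyticSet t) : AnalyticSet (s ∪ t) := by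
  rw [Set.union_eq_iUnion]
  refine AnalyticSet.iUnion fun b => ?_
  cases b
  · simpa using ht
  · simpa using hs

lemma exists_isolated {X : Type*} [TopologicalSpace X] [PolishSpace X] {K : Set X}
    (hK : IsClosed K) (hcnt : K.Countable) (hne : K.Nonempty) :
    ∃ x ∈ K, ∃ V : Set X, IsOpen V ∧ K ∩ V = {x} := by
  haveI : PolishSpace K := hK.polishSpace
  letI := TopologicalSpace.upgradeIsCompletelyMetrizable K
  haveI : Countable K := hcnt.to_subtype
  haveI : Nonempty K := hne.to_subtype
  obtain ⟨k, hk⟩ := nonempty_interior_of_iUnion_of_closed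
    (f := fun k : K => ({k} : Set K)) (fun _ => isClosed_singleton) (by ext x; simp)
  obtain ⟨w, hw⟩ := hk
  have hwk : w = k := by simpa using interior_subset hw
  subst hwk
  obtain ⟨t, hts, htop, hwt⟩ := mem_interior.1 hw
  have htw : t = {w} := subset_antisymm hts (by simpa using hwt)
  subst htw
  obtain ⟨V, hVopen, hVeq⟩ := isOpen_induced_iff.1 htop
  refine ⟨(w : X), w.2, V, hVopen, ?_⟩
  ext x
  constructor
  · rintro ⟨hxK, hxV⟩
    have : (⟨x, hxK⟩ : K) ∈ Subtype.val ⁻¹' V := hxV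
    rw [hVeq] at this
    simpa using congrArg Subtype.val this
  · rintro rfl
    have : w ∈ Subtype.val ⁻¹' V := by rw [hVeq]; rfl
    exact ⟨w.2, this⟩

open Metric Bornology in
/-- Main step: complement of the range of a continuous countable-to-one map
between Polish spaces is analytic. -/
lemma compl_range_analytic {X Y : Type*} [TopologicalSpace X] [PolishSpace X]
    [TopologicalSpace Y] [PolishSpace Y] [MeasurableSpace Y] [BorelSpace Y]
    (f : X → Y) (hcont : Continuous f) (hfib : ∀ y : Y, (f ⁻¹' {y}).Countable) :
    AnalyticSet (range f)ᶜ := by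
  rcases isEmpty_or_nonempty X with hX | hX
  · have : range f = ∅ := range_eq_empty f
    rw [this, compl_empty]
    exact isClosed_univ.analyticSet
  letI := TopologicalSpace.upgradeIsCompletelyMetrizable X
  obtain ⟨b, b_count, b_nonempty, hb⟩ := TopologicalSpace.exists_countable_basis X
  haveI : Encodable b := b_count.toEncodable
  haveI : Nonempty b := by
    obtain ⟨x0⟩ := hX
    obtain ⟨v, hvb, -, -⟩ := hb.exists_subset_of_mem_open (mem_univ x0) isOpen_univ
    exact ⟨⟨v, hvb⟩⟩
  obtain ⟨u, u_anti, u_pos, u_lim⟩ :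
      ∃ u : ℕ → ℝ, StrictAnti u ∧ (∀ n : ℕ, 0 < u n) ∧ Filter.Tendsto u Filter.atTop (nhds 0) :=
    exists_seq_strictAnti_tendsto (0 : ℝ)
  have hsep : ∀ U s t : b, ∃ C C' : Set Y, AnalyticSet Cᶜ ∧ AnalyticSet C'ᶜ ∧
      (f '' ((s : Set X) ∩ U)) \ (f '' ((t : Set X) ∩ U)) ⊆ C ∧
      (f '' ((t : Set X) ∩ U)) \ (f '' ((s : Set X) ∩ U)) ⊆ C' ∧ Disjoint C C' := by
    intro U s t
    exact secondSep (((hb.isOpen s.2).inter (hb.isOpen U.2)).analyticSet_image hcont)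
      (((hb.isOpen t.2).inter (hb.isOpen U.2)).analyticSet_image hcont)
  choose C C' hC hC' hsub hsub' hdisj using hsep
  let E : b → b → Set Y := fun U s =>
    closure (f '' ((s : Set X) ∩ U)) ∩
      ⋂ (t : b) (_ : Disjoint (s : Set X) (t : Set X)), (C U s t ∩ C' U t s)
  let F : b → ℕ → Set Y := fun U n =>
    ⋃ (s : b) (_ : IsBounded (s : Set X) ∧ diam (s : Set X) ≤ u n), E U s
  -- hard inclusion
  have hhard : ∀ U : b, (⋂ n, F U n) ⊆ range f := by
    intro U x hx
    have C1 : ∀ n, ∃ (s : b) (_ : IsBounded (s : Set X) ∧ diam (s : Set X) ≤ u n), x ∈ E U s :=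
      fun n => by simpa only [F, mem_iUnion] using mem_iInter.1 hx n
    choose s hs hxs using C1
    have C2 : ∀ n, (s n : Set X).Nonempty := by
      intro n
      rw [nonempty_iff_ne_empty]
      intro hn
      have := (s n).2
      rw [hn] at this
      exact b_nonempty this
    choose y' hy' using C2
    have I : ∀ m n, ((s m : Set X) ∩ (s n : Set X)).Nonempty := by
      intro m n
      rw [← not_disjoint_iff_nonempty_inter]
      by_contra! hd
      have A1 : x ∈ C U (s m) (s n) ∩ C' U (s n) (s m) := by
        have := (hxs m).2
        have h2 := mem_iInter.1 this (s n)
        exact mem_iInter.1 h2 hd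
      have A2 : x ∈ C U (s n) (s m) ∩ C' U (s m) (s n) := by
        have := (hxs n).2
        have h2 := mem_iInter.1 this (s m)
        exact mem_iInter.1 h2 hd.symm
      exact disjoint_left.1 (hdisj U (s m) (s n)) A1.1 A2.2
    have cauchy_y : CauchySeq y' := by
      have : Filter.Tendsto (fun n => 2 * u n) Filter.atTop (nhds 0) := by
        simpa only [mul_zero] using u_lim.const_mul 2
      refine cauchySeq_of_le_tendsto_0' (fun n => 2 * u n) (fun m n hmn => ?_) this
      rcases I m n with ⟨z, zsm, zsn⟩
      calc
        dist (y' m) (y' n) ≤ dist (y' m) z + dist z (y' n) := dist_triangle _ _ _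
        _ ≤ u m + u n :=
          (add_le_add ((dist_le_diam_of_mem (hs m).1 (hy' m) zsm).trans (hs m).2)
            ((dist_le_diam_of_mem (hs n).1 zsn (hy' n)).trans (hs n).2))
        _ ≤ 2 * u m := by linarith [u_anti.antitone hmn]
    let z := Filter.limUnder Filter.atTop y'
    have y_lim : Filter.Tendsto y' Filter.atTop (nhds z) := cauchy_y.tendsto_limUnder
    suffices hfz : f z = x by
      rw [← hfz]; exact mem_range_self _
    by_contra! hne
    obtain ⟨v, w, v_open, w_open, fzv, xw, hvw⟩ := t2_separation hne
    obtain ⟨δ, δpos, hδ⟩ : ∃ δ > (0 : ℝ), ball z δ ⊆ f ⁻¹' v := by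
      apply Metric.mem_nhds_iff.1
      exact hcont.continuousAt.preimage_mem_nhds (v_open.mem_nhds fzv)
    obtain ⟨n, hn⟩ : ∃ n, u n + dist (y' n) z < δ := by
      have : Filter.Tendsto (fun n => u n + dist (y' n) z) Filter.atTop (nhds 0) := by
        simpa only [add_zero] using u_lim.add (tendsto_iff_dist_tendsto_zero.1 y_lim)
      exact ((tendsto_order.1 this).2 _ δpos).exists
    have fsnv : f '' ((s n : Set X) ∩ U) ⊆ v := by
      rintro - ⟨a, ⟨ha, -⟩, rfl⟩
      apply hδ
      show dist a z < δ
      calc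
        dist a z ≤ dist a (y' n) + dist (y' n) z := dist_triangle _ _ _
        _ ≤ u n + dist (y' n) z :=
          add_le_add_left ((dist_le_diam_of_mem (hs n).1 ha (hy' n)).trans (hs n).2) _
        _ < δ := hn
    have : x ∈ closure v := closure_mono fsnv (hxs n).1
    exact disjoint_left.1 (hvw.closure_left w_open) this xw
  -- easy inclusion
  have heasy : ∀ y ∈ range f, ∃ U : b, ∀ n, y ∈ F U n := by
    rintro y ⟨xb0, rfl⟩
    set K : Set X := f ⁻¹' {f xb0} with hKdef
    have hKcl : IsClosed K := isClosed_singleton.preimage hcont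
    have hKne : K.Nonempty := ⟨xb0, rfl⟩
    obtain ⟨xb, hxbK, V, hVopen, hKV⟩ := exists_isolated hKcl (hfib (f xb0)) hKne
    have hxbV : xb ∈ V := by
      have : xb ∈ ({xb} : Set X) := rfl
      rw [← hKV] at this
      exact this.2
    obtain ⟨U, hUb, hxbU, hUV⟩ := hb.exists_subset_of_mem_open hxbV hVopen
    have hfxb : f xb = f xb0 := hxbK
    refine ⟨⟨U, hUb⟩, fun n => ?_⟩
    obtain ⟨sv, svb, xbsv, hsvball⟩ : ∃ sv ∈ b, xb ∈ sv ∧ sv ⊆ ball xb (u n / 2) := by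
      apply hb.mem_nhds_iff.1
      exact ball_mem_nhds _ (half_pos (u_pos n))
    have diam_s : diam sv ≤ u n := by
      apply (diam_mono hsvball isBounded_ball).trans
      convert diam_ball (x := xb) (half_pos (u_pos n)).le
      · rfl
      · ring
    refine mem_iUnion.2 ⟨⟨sv, svb⟩, mem_iUnion.2 ⟨⟨isBounded_ball.subset hsvball, diam_s⟩, ?_⟩⟩
    have hnotin : ∀ t : b, Disjoint sv (t : Set X) → f xb0 ∉ f '' ((t : Set X) ∩ U) := by
      rintro t hd ⟨x', ⟨hx't, hx'U⟩, hfx'⟩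
      have hx'K : x' ∈ K := by
        show f x' ∈ ({f xb0} : Set Y)
        simp [hfx']
      have : x' ∈ K ∩ V := ⟨hx'K, hUV hx'U⟩
      rw [hKV] at this
      rw [this] at hx't
      exact disjoint_left.1 hd xbsv hx't
    have hyin : f xb0 ∈ f '' (sv ∩ U) := ⟨xb, ⟨xbsv, hxbU⟩, hfxb⟩
    refine ⟨subset_closure hyin, ?_⟩
    refine mem_iInter.2 fun t => mem_iInter.2 fun hd => ?_
    constructor
    · exact hsub ⟨U, hUb⟩ ⟨sv, svb⟩ t ⟨hyin, hnotin t hd⟩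
    · exact hsub' ⟨U, hUb⟩ t ⟨sv, svb⟩ ⟨hyin, hnotin t hd⟩
  -- the key identity
  have hkey : (range f)ᶜ = ⋂ U : b, (⋂ n, F U n)ᶜ := by
    ext y
    simp only [mem_compl_iff, mem_iInter]
    constructor
    · intro hy U hmem
      exact hy (hhard U (mem_iInter.2 hmem))
    · intro hy hr
      obtain ⟨U, hU⟩ := heasy y hr
      exact hy U hU
  rw [hkey]
  -- analyticity
  refine AnalyticSet.iInter fun U => ?_
  rw [compl_iInter]
  refine AnalyticSet.iUnion fun n => ?_
  rw [compl_iUnion]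
  refine AnalyticSet.iInter fun sv => ?_
  rw [compl_iUnion]
  by_cases hcond : IsBounded (sv : Set X) ∧ diam (sv : Set X) ≤ u n
  · have : (⋂ (_ : IsBounded (sv : Set X) ∧ diam (sv : Set X) ≤ u n), (E U sv)ᶜ) =
        (E U sv)ᶜ := by
      simp [hcond]
    rw [this]
    show AnalyticSet ((closure (f '' ((sv : Set X) ∩ U)) ∩
      ⋂ (t : b) (_ : Disjoint (sv : Set X) (t : Set X)), (C U sv t ∩ C' U t sv))ᶜ)
    rw [compl_inter]
    refine aunion ?_ ?_
    · exact isClosed_closure.isOpen_compl.measurableSet.analyticSet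
    · rw [compl_iInter]
      refine AnalyticSet.iUnion fun t => ?_
      rw [compl_iInter]
      by_cases hd : Disjoint (sv : Set X) (t : Set X)
      · have : (⋃ (_ : Disjoint (sv : Set X) (t : Set X)), (C U sv t ∩ C' U t sv)ᶜ) =
            (C U sv t ∩ C' U t sv)ᶜ := by simp [hd]
        rw [this, compl_inter]
        exact aunion (hC U sv t) (hC' U t sv)
      · have : (⋃ (_ : Disjoint (sv : Set X) (t : Set X)), (C U sv t ∩ C' U t sv)ᶜ) =
            (∅ : Set Y) := by simp [hd]
        rw [this]
        exact analyticSet_empty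
  · have : (⋂ (_ : IsBounded (sv : Set X) ∧ diam (sv : Set X) ≤ u n), (E U sv)ᶜ) = univ := by
      simp [hcond]
    rw [this]
    exact isClosed_univ.analyticSet

end LNaux

/-- Lusin–Novikov: the image of a Borel map with countable fibers between
standard Borel spaces is Borel. -/
theorem stmt_2 {X Y : Type*} [MeasurableSpace X] [StandardBorelSpace X]
    [MeasurableSpace Y] [StandardBorelSpace Y]
    (f : X → Y) (hf : Measurable f)
    (hfib : ∀ y : Y, (f ⁻¹' {y}).Countable) :
    MeasurableSet (Set.range f) := by
  letI := upgradeStandardBorel Y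
  letI := upgradeStandardBorel X
  have hA : MeasureTheory.AnalyticSet (Set.range f) := by
    rw [← Set.image_univ]
    exact MeasurableSet.univ.analyticSet_image hf
  obtain ⟨t', ht'le, hcont, ht'pol⟩ := hf.exists_continuous
  have hAc : MeasureTheory.AnalyticSet (Set.range f)ᶜ :=
    @LNaux.compl_range_analytic X Y t' ht'pol _ _ _ _ f hcont hfib
  obtain ⟨u, hsub, hdis, hmeas⟩ := hA.measurablySeparable hAc disjoint_compl_right
  have hu : u = Set.range f := by
    refine subset_antisymm (fun x hx => ?_) hsub
    by_contra hxr
    exact Set.disjoint_left.1 hdis hxr hx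
  rwa [hu] at hmeas
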